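/- Let n = p + q and J = diag(I_p, −I_q) ∈ ℂ^{n×n}. A matrix X ∈ ℂ^{n×n} satisfies Xᴴ J X = J if and only if there exist a matrix W ∈ ℂ^{p×q} and unitary matrices V₊ ∈ ℂ^{p×p}, V₋ ∈ ℂ^{q×q} such that X is the block matrix X = [[(I_p + W Wᴴ)^{1/2}, W], [Wᴴ, (I_q + Wᴴ W)^{1/2}]] · diag(V₊, V₋), where (I_p + W Wᴴ)^{1/2} and (I_q + Wᴴ W)^{1/2} denote the (unique) positive semi-definite square roots of the positive definite Hermitian matrices I_p + W Wᴴ and I_q + Wᴴ W. -/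

import Mathlib

open Matrix Polynomial
open scoped ComplexOrder

/-- The positive semidefinite square root of a positive semidefinite matrix
(restored: removed from Mathlib since the original was written). -/
noncomputable def Matrix.PosSemidef.sqrt {n 𝕜 : Type*} [Fintype n] [DecidableEq n] [RCLike 𝕜]
    {A : Matrix n n 𝕜} (hA : A.PosSemidef) : Matrix n n 𝕜 :=
  hA.1.eigenvectorUnitary.1 * diagonal ((↑) ∘ (·.sqrt) ∘ hA.1.eigenvalues) *
  (star hA.1.eigenvectorUnitary : Matrix n n 𝕜)

section SqrtPort
open scoped MatrixOrder

lemma Matrix.PosSemidef.sqrt_eq_cfcSqrt {n : Type*} [Fintype n] [DecidableEq n]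
    {A : Matrix n n ℂ} (hA : A.PosSemidef) : hA.sqrt = CFC.sqrt A := by
  rw [CFC.sqrt_eq_real_sqrt A hA.nonneg, cfcₙ_eq_cfc, hA.1.cfc_eq]
  rfl

lemma Matrix.PosSemidef.posSemidef_sqrt {n : Type*} [Fintype n] [DecidableEq n]
    {A : Matrix n n ℂ} (hA : A.PosSemidef) : hA.sqrt.PosSemidef := by
  rw [hA.sqrt_eq_cfcSqrt]
  exact Matrix.nonneg_iff_posSemidef.mp (CFC.sqrt_nonneg A)

lemma Matrix.PosSemidef.sqrt_mul_self {n : Type*} [Fintype n] [DecidableEq n]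
    {A : Matrix n n ℂ} (hA : A.PosSemidef) : hA.sqrt * hA.sqrt = A := by
  rw [hA.sqrt_eq_cfcSqrt]
  exact CFC.sqrt_mul_sqrt_self A hA.nonneg

lemma Matrix.PosSemidef.eq_sqrt_of_sq_eq {n : Type*} [Fintype n] [DecidableEq n]
    {A B : Matrix n n ℂ} (hA : A.PosSemidef) (hB : B.PosSemidef) (h : A ^ 2 = B) :
    A = hB.sqrt := by
  rw [hB.sqrt_eq_cfcSqrt]
  exact (CFC.sqrt_unique (by rw [← sq]; exact h) hA.nonneg).symm

end SqrtPort

variable {n : Type*} [Fintype n] [DecidableEq n]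

private lemma conj_aeval (U D : Matrix n n ℂ) (hU : U * star U = 1) (hU' : star U * U = 1)
    (f : ℝ[X]) :
    Polynomial.aeval (U * D * star U) f = U * Polynomial.aeval D f * star U := by
  induction f using Polynomial.induction_on' with
  | add p q hp hq => rw [map_add, map_add, hp, hq, Matrix.mul_add, Matrix.add_mul]
  | monomial k c =>
    have hpow : (U * D * star U) ^ k = U * D ^ k * star U := by
      induction k with
      | zero => simpa using hU.symm
      | succ k ih =>
        calc (U * D * star U) ^ (k+1) = (U * D ^ k * star U) * (U * D * star U) := by
              rw [pow_succ, ih]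
          _ = U * D ^ k * (star U * U) * D * star U := by
              simp only [Matrix.mul_assoc]
          _ = U * D ^ (k+1) * star U := by
              rw [hU', pow_succ]; simp only [Matrix.mul_assoc, Matrix.mul_one, Matrix.one_mul]
    rw [aeval_monomial, aeval_monomial, hpow]
    have hc := Algebra.commutes (A := Matrix n n ℂ) c
    have hck : D ^ k * algebraMap ℝ (Matrix n n ℂ) c = algebraMap ℝ (Matrix n n ℂ) c * D ^ k :=
      (hc _).symm
    calc algebraMap ℝ (Matrix n n ℂ) c * (U * D ^ k * star U)
        = U * D ^ k * star U * algebraMap ℝ (Matrix n n ℂ) c := by rw [hc]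
      _ = U * (D ^ k * (star U * algebraMap ℝ (Matrix n n ℂ) c)) := by
          simp only [Matrix.mul_assoc]
      _ = U * (D ^ k * (algebraMap ℝ (Matrix n n ℂ) c * star U)) := by rw [← hc]
      _ = U * (D ^ k * algebraMap ℝ (Matrix n n ℂ) c) * star U := by
          simp only [Matrix.mul_assoc]
      _ = U * (algebraMap ℝ (Matrix n n ℂ) c * D ^ k) * star U := by rw [hck]

private lemma aeval_diagonal (d : n → ℂ) (f : ℝ[X]) :
    Polynomial.aeval (Matrix.diagonal d) f
      = Matrix.diagonal (fun i => Polynomial.aeval (d i) f) := by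
  have h1 : Matrix.diagonal d = (Matrix.diagonalAlgHom ℝ : (n → ℂ) →ₐ[ℝ] Matrix n n ℂ) d := rfl
  rw [h1, aeval_algHom_apply]
  show Matrix.diagonal (Polynomial.aeval d f) = _
  have h2 : (Polynomial.aeval d f : n → ℂ) = fun i => Polynomial.aeval (d i) f := by
    funext i
    exact (aeval_algHom_apply (Pi.evalAlgHom ℝ (fun _ : n => ℂ) i) d f).symm
  rw [h2]

private lemma sqrt_eq_aeval {A : Matrix n n ℂ} (hA : A.PosSemidef) :
    ∃ f : ℝ[X], hA.sqrt = Polynomial.aeval A f := by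
  classical
  set s : Finset ℝ := Finset.image hA.1.eigenvalues Finset.univ with hs
  refine ⟨Lagrange.interpolate s id Real.sqrt, ?_⟩
  set f := Lagrange.interpolate s id Real.sqrt with hf
  have hval : ∀ i, Polynomial.eval (hA.1.eigenvalues i) f = Real.sqrt (hA.1.eigenvalues i) := by
    intro i
    exact Lagrange.eval_interpolate_at_node _ (Set.injOn_id _)
      (Finset.mem_image_of_mem _ (Finset.mem_univ i))
  set U : Matrix n n ℂ := (hA.1.eigenvectorUnitary : Matrix n n ℂ) with hUdef
  have hU : U * star U = 1 := Unitary.mul_star_self_of_mem hA.1.eigenvectorUnitary.2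
  have hU' : star U * U = 1 := Unitary.star_mul_self_of_mem hA.1.eigenvectorUnitary.2
  conv_rhs => rw [hA.1.spectral_theorem, Unitary.conjStarAlgAut_apply]
  rw [conj_aeval _ _ hU hU', aeval_diagonal]
  rw [Matrix.PosSemidef.sqrt]
  have hfun : (fun i => Polynomial.aeval ((RCLike.ofReal ∘ hA.1.eigenvalues : n → ℂ) i) f)
      = ((RCLike.ofReal ∘ Real.sqrt ∘ hA.1.eigenvalues : n → ℂ)) := by
    funext i
    have h2 : ((RCLike.ofReal ∘ hA.1.eigenvalues : n → ℂ) i) = algebraMap ℝ ℂ (hA.1.eigenvalues i) := rfl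
    rw [h2, aeval_algebraMap_apply_eq_algebraMap_eval, hval]
    rfl
  rw [hfun]

private lemma sqrt_comm {A B : Matrix n n ℂ} (hA : A.PosSemidef) (h : A * B = B * A) :
    hA.sqrt * B = B * hA.sqrt := by
  obtain ⟨f, hf⟩ := sqrt_eq_aeval hA
  rw [hf]
  exact (Algebra.commute_of_mem_adjoin_singleton_of_commute
    (Polynomial.aeval_mem_adjoin_singleton ℝ A) h.symm).symm.eq

private lemma posSemidef_blockDiag {m l : Type*} [Fintype m] [Fintype l] [DecidableEq m]
    [DecidableEq l] {A : Matrix m m ℂ} {D : Matrix l l ℂ}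
    (hA : A.PosSemidef) (hD : D.PosSemidef) : (Matrix.fromBlocks A 0 0 D).PosSemidef := by
  have key : Matrix.fromBlocks A 0 0 D
      = (Matrix.fromBlocks hA.sqrt 0 0 hD.sqrt)ᴴ * (Matrix.fromBlocks hA.sqrt 0 0 hD.sqrt) := by
    rw [Matrix.fromBlocks_conjTranspose, Matrix.fromBlocks_multiply]
    simp [hA.posSemidef_sqrt.1.eq, hD.posSemidef_sqrt.1.eq, hA.sqrt_mul_self, hD.sqrt_mul_self]
  rw [key]
  exact Matrix.posSemidef_conjTranspose_mul_self _

private lemma sqrt_intertwine {p q : ℕ} (W : Matrix (Fin p) (Fin q) ℂ)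
    (h₁ : (1 + W * Wᴴ).PosSemidef) (h₂ : (1 + Wᴴ * W).PosSemidef) :
    h₁.sqrt * W = W * h₂.sqrt := by
  set K : Matrix (Fin p ⊕ Fin q) (Fin p ⊕ Fin q) ℂ := Matrix.fromBlocks 0 W Wᴴ 0 with hK
  have hKh : Kᴴ = K := by
    rw [hK, Matrix.fromBlocks_conjTranspose]; simp
  have hM : (1 + K * K).PosSemidef := by
    have h := Matrix.posSemidef_conjTranspose_mul_self K
    rw [hKh] at h
    exact Matrix.PosSemidef.one.add h
  have hMeq : 1 + K * K = Matrix.fromBlocks (1 + W * Wᴴ) 0 0 (1 + Wᴴ * W) := by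
    rw [hK, Matrix.fromBlocks_multiply]
    rw [← Matrix.fromBlocks_one (l := Fin p) (m := Fin q)]
    rw [Matrix.fromBlocks_add]
    simp
  have hsq : hM.sqrt = Matrix.fromBlocks h₁.sqrt 0 0 h₂.sqrt := by
    refine ((posSemidef_blockDiag h₁.posSemidef_sqrt h₂.posSemidef_sqrt).eq_sqrt_of_sq_eq hM ?_).symm
    rw [pow_two, Matrix.fromBlocks_multiply, hMeq]
    simp [h₁.sqrt_mul_self, h₂.sqrt_mul_self]
  have hcomm : (1 + K * K) * K = K * (1 + K * K) := by noncomm_ring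
  have hres := sqrt_comm hM hcomm
  rw [hsq, hK, Matrix.fromBlocks_multiply, Matrix.fromBlocks_multiply] at hres
  have h12 := congrArg Matrix.toBlocks₁₂ hres
  simpa using h12

private lemma J_block (p q : ℕ) :
    (Matrix.diagonal fun i : Fin (p + q) => if (i : ℕ) < p then (1 : ℂ) else -1)
      = Matrix.reindex finSumFinEquiv finSumFinEquiv
          (Matrix.fromBlocks (1 : Matrix (Fin p) (Fin p) ℂ) 0 0 (-1)) := by
  have h1 : Matrix.fromBlocks (1 : Matrix (Fin p) (Fin p) ℂ) 0 0 (-1)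
      = Matrix.diagonal (Sum.elim (fun _ : Fin p => (1 : ℂ)) (fun _ : Fin q => -1)) := by
    ext i j
    rcases i with a | a <;> rcases j with b | b <;>
      simp [Matrix.diagonal_apply, Matrix.one_apply, apply_ite (fun x : ℂ => -x)]
  rw [h1, Matrix.reindex_apply, Matrix.submatrix_diagonal_equiv]
  have h3 : ((Sum.elim (fun _ : Fin p => (1 : ℂ)) fun _ : Fin q => -1) ∘ ⇑finSumFinEquiv.symm)
      = fun i : Fin (p + q) => if (i : ℕ) < p then (1 : ℂ) else -1 := by
    funext i
    induction i using Fin.addCases with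
    | left i =>
        simp [Function.comp, finSumFinEquiv_symm_apply_castAdd, i.is_lt]
    | right i =>
        have hc : ¬ ((Fin.natAdd p i : Fin (p + q)) : ℕ) < p := by simp [Fin.natAdd]
        simp [Function.comp, finSumFinEquiv_symm_apply_natAdd, hc]
  rw [h3]

private lemma reindex_mul {p q : ℕ} (P Q : Matrix (Fin p ⊕ Fin q) (Fin p ⊕ Fin q) ℂ) :
    (Matrix.reindex finSumFinEquiv finSumFinEquiv P)
        * (Matrix.reindex finSumFinEquiv finSumFinEquiv Q)
      = Matrix.reindex finSumFinEquiv finSumFinEquiv (P * Q) := by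
  simp only [Matrix.reindex_apply]
  exact Matrix.submatrix_mul_equiv P Q _ finSumFinEquiv.symm _

private lemma reindex_conjTranspose {p q : ℕ} (P : Matrix (Fin p ⊕ Fin q) (Fin p ⊕ Fin q) ℂ) :
    (Matrix.reindex finSumFinEquiv finSumFinEquiv P)ᴴ
      = Matrix.reindex finSumFinEquiv finSumFinEquiv Pᴴ := by
  simp [Matrix.reindex_apply]

/-- Lemma 5.2 of the paper (hyperbolic polar decomposition): for
`J = diag(I_p, -I_q)`, a matrix `X` satisfies `Xᴴ J X = J` if and only if
`X = [[(I + W Wᴴ)^{1/2}, W], [Wᴴ, (I + Wᴴ W)^{1/2}]] · diag(V₊, V₋)`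
for some `W ∈ ℂ^{p×q}` and unitary `V₊ ∈ ℂ^{p×p}`, `V₋ ∈ ℂ^{q×q}`, where the square
roots are the unique positive semi-definite square roots. -/
theorem hyperbolic_polar_decomposition
    (p q : ℕ)
    (J : Matrix (Fin (p + q)) (Fin (p + q)) ℂ)
    (hJ : J = Matrix.diagonal fun i : Fin (p + q) => if (i : ℕ) < p then (1 : ℂ) else -1)
    (X : Matrix (Fin (p + q)) (Fin (p + q)) ℂ) :
    Xᴴ * J * X = J ↔
    ∃ (W : Matrix (Fin p) (Fin q) ℂ)
      (Vp : Matrix (Fin p) (Fin p) ℂ) (Vm : Matrix (Fin q) (Fin q) ℂ),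
      Vpᴴ * Vp = 1 ∧ Vp * Vpᴴ = 1 ∧ Vmᴴ * Vm = 1 ∧ Vm * Vmᴴ = 1 ∧
      ∃ (h₁ : (1 + W * Wᴴ).PosSemidef) (h₂ : (1 + Wᴴ * W).PosSemidef),
        X = Matrix.reindex finSumFinEquiv finSumFinEquiv
              (Matrix.fromBlocks h₁.sqrt W Wᴴ h₂.sqrt *
               Matrix.fromBlocks Vp 0 0 Vm) := by
  constructor
  · intro hX
    obtain ⟨Y, hXY⟩ : ∃ Y, X = Matrix.reindex finSumFinEquiv finSumFinEquiv Y :=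
      ⟨X.submatrix finSumFinEquiv finSumFinEquiv, by
        rw [Matrix.reindex_apply, Matrix.submatrix_submatrix]
        simp [Equiv.self_comp_symm]⟩
    obtain ⟨A, B, C, D, rfl⟩ : ∃ A B C D, Y = Matrix.fromBlocks A B C D :=
      ⟨_, _, _, _, (Matrix.fromBlocks_toBlocks Y).symm⟩
    set Jb : Matrix (Fin p ⊕ Fin q) (Fin p ⊕ Fin q) ℂ := Matrix.fromBlocks 1 0 0 (-1) with hJb
    set Y := Matrix.fromBlocks A B C D with hYdef
    have hY : Yᴴ * Jb * Y = Jb := by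
      have h5 := hX
      rw [hJ, J_block p q, hXY, reindex_conjTranspose, reindex_mul, reindex_mul] at h5
      exact (Matrix.reindex finSumFinEquiv finSumFinEquiv).injective h5
    have hJbJb : Jb * Jb = (1 : Matrix (Fin p ⊕ Fin q) (Fin p ⊕ Fin q) ℂ) := by
      rw [hJb, Matrix.fromBlocks_multiply, ← Matrix.fromBlocks_one]
      simp
    have hL : (Jb * Yᴴ * Jb) * Y = 1 := by
      calc (Jb * Yᴴ * Jb) * Y = Jb * (Yᴴ * Jb * Y) := by simp only [Matrix.mul_assoc]
        _ = Jb * Jb := by rw [hY]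
        _ = 1 := hJbJb
    have hR : Y * (Jb * Yᴴ * Jb) = 1 := mul_eq_one_comm.mp hL
    have hY2 : Y * Jb * Yᴴ = Jb := by
      calc Y * Jb * Yᴴ = Y * Jb * Yᴴ * (Jb * Jb) := by rw [hJbJb, Matrix.mul_one]
        _ = (Y * (Jb * Yᴴ * Jb)) * Jb := by simp only [Matrix.mul_assoc]
        _ = Jb := by rw [hR, Matrix.one_mul]
    -- block equations
    rw [hYdef, hJb, Matrix.fromBlocks_conjTranspose, Matrix.fromBlocks_multiply,
      Matrix.fromBlocks_multiply] at hY hY2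
    have e22 : Bᴴ * B - Dᴴ * D = -1 := by
      have h8 := congrArg Matrix.toBlocks₂₂ hY
      simpa [sub_eq_add_neg] using h8
    have f11 : A * Aᴴ - B * Bᴴ = 1 := by
      have h8 := congrArg Matrix.toBlocks₁₁ hY2
      simpa [sub_eq_add_neg] using h8
    have f12 : A * Cᴴ - B * Dᴴ = 0 := by
      have h8 := congrArg Matrix.toBlocks₁₂ hY2
      simpa [sub_eq_add_neg] using h8
    have f22 : C * Cᴴ - D * Dᴴ = -1 := by
      have h8 := congrArg Matrix.toBlocks₂₂ hY2
      simpa [sub_eq_add_neg] using h8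
    have hAA : A * Aᴴ = 1 + B * Bᴴ := sub_eq_iff_eq_add.mp f11
    have f22' : D * Dᴴ - C * Cᴴ = 1 := by rw [← neg_sub, f22, neg_neg]
    have hDD : D * Dᴴ = 1 + C * Cᴴ := sub_eq_iff_eq_add.mp f22'
    have e22' : Dᴴ * D - Bᴴ * B = 1 := by rw [← neg_sub, e22, neg_neg]
    have hDhD : Dᴴ * D = 1 + Bᴴ * B := sub_eq_iff_eq_add.mp e22'
    have hACh : A * Cᴴ = B * Dᴴ := sub_eq_zero.mp f12
    -- positive definiteness and invertibility
    have hPD1 : (A * Aᴴ).PosDef := by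
      rw [hAA]; exact Matrix.PosDef.one.add_posSemidef (Matrix.posSemidef_self_mul_conjTranspose B)
    have hPD2 : (D * Dᴴ).PosDef := by
      rw [hDD]; exact Matrix.PosDef.one.add_posSemidef (Matrix.posSemidef_self_mul_conjTranspose C)
    have hdetAAh : IsUnit (A * Aᴴ).det := (Matrix.isUnit_iff_isUnit_det _).mp hPD1.isUnit
    have hdetDDh : IsUnit (D * Dᴴ).det := (Matrix.isUnit_iff_isUnit_det _).mp hPD2.isUnit
    have hdetA : IsUnit A.det := by
      have h9 : IsUnit (A.det * Aᴴ.det) := by rw [← Matrix.det_mul]; exact hdetAAh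
      exact isUnit_of_mul_isUnit_left h9
    have hdetAh : IsUnit Aᴴ.det := by rw [Matrix.det_conjTranspose]; exact hdetA.star
    have hdetD : IsUnit D.det := by
      have h9 : IsUnit (D.det * Dᴴ.det) := by rw [← Matrix.det_mul]; exact hdetDDh
      exact isUnit_of_mul_isUnit_left h9
    have hdetDh : IsUnit Dᴴ.det := by rw [Matrix.det_conjTranspose]; exact hdetD.star
    -- square roots
    set S := hPD1.posSemidef.sqrt with hSdef
    set T := hPD2.posSemidef.sqrt with hTdef
    have hSS : S * S = A * Aᴴ := hPD1.posSemidef.sqrt_mul_self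
    have hTT : T * T = D * Dᴴ := hPD2.posSemidef.sqrt_mul_self
    have hSh : Sᴴ = S := hPD1.posSemidef.posSemidef_sqrt.1
    have hTh : Tᴴ = T := hPD2.posSemidef.posSemidef_sqrt.1
    have hdetS : IsUnit S.det := by
      have h9 : IsUnit (S.det * S.det) := by rw [← Matrix.det_mul, hSS]; exact hdetAAh
      exact isUnit_of_mul_isUnit_left h9
    have hdetT : IsUnit T.det := by
      have h9 : IsUnit (T.det * T.det) := by rw [← Matrix.det_mul, hTT]; exact hdetDDh
      exact isUnit_of_mul_isUnit_left h9
    have hSinvh : (S⁻¹)ᴴ = S⁻¹ := by rw [Matrix.conjTranspose_nonsing_inv, hSh]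
    have hTinvh : (T⁻¹)ᴴ = T⁻¹ := by rw [Matrix.conjTranspose_nonsing_inv, hTh]
    -- unitary parts
    obtain ⟨Up, hUpdef⟩ : ∃ U, U = S⁻¹ * A := ⟨_, rfl⟩
    obtain ⟨Um, hUmdef⟩ : ∃ U, U = T⁻¹ * D := ⟨_, rfl⟩
    have hAeq : A = S * Up := by
      rw [hUpdef]; exact (Matrix.mul_nonsing_inv_cancel_left S A hdetS).symm
    have hDeq : D = T * Um := by
      rw [hUmdef]; exact (Matrix.mul_nonsing_inv_cancel_left T D hdetT).symm
    have hUpUnit : Upᴴ * Up = 1 := by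
      rw [hUpdef, Matrix.conjTranspose_mul, hSinvh]
      have hinv : S⁻¹ * S⁻¹ = (A * Aᴴ)⁻¹ := by rw [← Matrix.mul_inv_rev, hSS]
      calc Aᴴ * S⁻¹ * (S⁻¹ * A) = Aᴴ * ((S⁻¹ * S⁻¹) * A) := by simp only [Matrix.mul_assoc]
        _ = Aᴴ * ((A * Aᴴ)⁻¹ * A) := by rw [hinv]
        _ = Aᴴ * ((Aᴴ)⁻¹ * (A⁻¹ * A)) := by rw [Matrix.mul_inv_rev]; simp only [Matrix.mul_assoc]
        _ = 1 := by
            rw [Matrix.nonsing_inv_mul A hdetA, Matrix.mul_one, Matrix.mul_nonsing_inv Aᴴ hdetAh]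
    have hUmUnit : Umᴴ * Um = 1 := by
      rw [hUmdef, Matrix.conjTranspose_mul, hTinvh]
      have hinv : T⁻¹ * T⁻¹ = (D * Dᴴ)⁻¹ := by rw [← Matrix.mul_inv_rev, hTT]
      calc Dᴴ * T⁻¹ * (T⁻¹ * D) = Dᴴ * ((T⁻¹ * T⁻¹) * D) := by simp only [Matrix.mul_assoc]
        _ = Dᴴ * ((D * Dᴴ)⁻¹ * D) := by rw [hinv]
        _ = Dᴴ * ((Dᴴ)⁻¹ * (D⁻¹ * D)) := by rw [Matrix.mul_inv_rev]; simp only [Matrix.mul_assoc]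
        _ = 1 := by
            rw [Matrix.nonsing_inv_mul D hdetD, Matrix.mul_one, Matrix.mul_nonsing_inv Dᴴ hdetDh]
    have hUpU2 : Up * Upᴴ = 1 := mul_eq_one_comm.mp hUpUnit
    have hUmU2 : Um * Umᴴ = 1 := mul_eq_one_comm.mp hUmUnit
    -- the W matrix
    obtain ⟨W, hWdef⟩ : ∃ W, W = B * Umᴴ := ⟨_, rfl⟩
    have hWWh : W * Wᴴ = B * Bᴴ := by
      rw [hWdef, Matrix.conjTranspose_mul, Matrix.conjTranspose_conjTranspose]
      calc B * Umᴴ * (Um * Bᴴ) = B * ((Umᴴ * Um) * Bᴴ) := by simp only [Matrix.mul_assoc]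
        _ = B * Bᴴ := by rw [hUmUnit, Matrix.one_mul]
    have h1eq : 1 + W * Wᴴ = A * Aᴴ := by rw [hWWh, hAA]
    have h₁ : (1 + W * Wᴴ).PosSemidef := by rw [h1eq]; exact hPD1.posSemidef
    have hSsqrt : h₁.sqrt = S := by
      refine (hPD1.posSemidef.posSemidef_sqrt.eq_sqrt_of_sq_eq h₁ ?_).symm
      rw [pow_two, hSS]; exact h1eq.symm
    have hDUm : D * Umᴴ = T := by
      rw [hUmdef, Matrix.conjTranspose_mul, hTinvh]
      calc D * (Dᴴ * T⁻¹) = D * Dᴴ * T⁻¹ := by rw [Matrix.mul_assoc]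
        _ = T * (T * T⁻¹) := by rw [← hTT, Matrix.mul_assoc]
        _ = T := by rw [Matrix.mul_nonsing_inv T hdetT, Matrix.mul_one]
    have hUmD : Um * Dᴴ = T := by
      have h9 := congrArg Matrix.conjTranspose hDUm
      simpa [Matrix.conjTranspose_mul, hTh] using h9
    have hWhW : 1 + Wᴴ * W = T * T := by
      have hBB : Bᴴ * B = Dᴴ * D - 1 := by rw [hDhD]; abel
      calc 1 + Wᴴ * W = 1 + Um * (Bᴴ * (B * Umᴴ)) := by
            rw [hWdef, Matrix.conjTranspose_mul, Matrix.conjTranspose_conjTranspose]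
            simp only [Matrix.mul_assoc]
        _ = 1 + Um * (Bᴴ * B) * Umᴴ := by simp only [Matrix.mul_assoc]
        _ = 1 + Um * (Dᴴ * D - 1) * Umᴴ := by rw [hBB]
        _ = 1 + (Um * (Dᴴ * D) * Umᴴ - Um * Umᴴ) := by
            rw [Matrix.mul_sub, Matrix.sub_mul, Matrix.mul_one]
        _ = Um * (Dᴴ * D) * Umᴴ := by rw [hUmU2]; abel
        _ = (Um * Dᴴ) * (D * Umᴴ) := by simp only [Matrix.mul_assoc]
        _ = T * T := by rw [hUmD, hDUm]
    have h₂ : (1 + Wᴴ * W).PosSemidef := by rw [hWhW, hTT]; exact hPD2.posSemidef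
    have hTsqrt : h₂.sqrt = T := by
      refine (hPD2.posSemidef.posSemidef_sqrt.eq_sqrt_of_sq_eq h₂ ?_).symm
      rw [pow_two, hTT]
      rw [← hTT]; exact hWhW.symm
    -- the C block
    have hkey : h₁.sqrt * W = W * h₂.sqrt := sqrt_intertwine W h₁ h₂
    have hSW : S * W = W * T := by rw [← hSsqrt, ← hTsqrt]; exact hkey
    have hBDh : B * Dᴴ = W * T := by
      rw [hDeq, Matrix.conjTranspose_mul, hTh, hWdef, Matrix.mul_assoc]
    have hUpCh : Up * Cᴴ = W := by
      have h6 : S * (Up * Cᴴ) = S * W := by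
        calc S * (Up * Cᴴ) = A * Cᴴ := by rw [← Matrix.mul_assoc, ← hAeq]
          _ = W * T := by rw [hACh, hBDh]
          _ = S * W := hSW.symm
      have h7 := congrArg (fun M => S⁻¹ * M) h6
      simpa [Matrix.nonsing_inv_mul_cancel_left S _ hdetS] using h7
    have hCeq : C = Wᴴ * Up := by
      have h7 : Cᴴ = Upᴴ * W := by
        have h8 := congrArg (fun M => Upᴴ * M) hUpCh
        simpa [← Matrix.mul_assoc, hUpUnit] using h8
      have h9 := congrArg Matrix.conjTranspose h7
      simpa [Matrix.conjTranspose_mul] using h9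
    have hBeq : B = W * Um := by
      rw [hWdef, Matrix.mul_assoc, hUmUnit, Matrix.mul_one]
    -- assemble
    refine ⟨W, Up, Um, hUpUnit, hUpU2, hUmUnit, hUmU2, h₁, h₂, ?_⟩
    rw [hXY]
    congr 1
    rw [hYdef, Matrix.fromBlocks_multiply, hSsqrt, hTsqrt]
    rw [Matrix.mul_zero, Matrix.mul_zero, Matrix.mul_zero, Matrix.mul_zero,
      add_zero, add_zero, zero_add, zero_add]
    rw [← hAeq, ← hBeq, ← hCeq, ← hDeq]
  · rintro ⟨W, Vp, Vm, hVp1, hVp2, hVm1, hVm2, h₁, h₂, hXeq⟩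
    subst hXeq
    rw [hJ, J_block p q]
    set Jb : Matrix (Fin p ⊕ Fin q) (Fin p ⊕ Fin q) ℂ := Matrix.fromBlocks 1 0 0 (-1) with hJb
    set M := Matrix.fromBlocks h₁.sqrt W Wᴴ h₂.sqrt with hM
    set V := Matrix.fromBlocks Vp (0 : Matrix (Fin p) (Fin q) ℂ) 0 Vm with hV
    have hMh : Mᴴ = M := by
      rw [hM, Matrix.fromBlocks_conjTranspose]
      simp [h₁.posSemidef_sqrt.1.eq, h₂.posSemidef_sqrt.1.eq]
    have hSW : h₁.sqrt * W = W * h₂.sqrt := sqrt_intertwine W h₁ h₂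
    have hWS : Wᴴ * h₁.sqrt = h₂.sqrt * Wᴴ := by
      have h5 := congrArg Matrix.conjTranspose hSW
      simpa [Matrix.conjTranspose_mul, h₁.posSemidef_sqrt.1.eq, h₂.posSemidef_sqrt.1.eq] using h5
    have step1 : M * Jb = Matrix.fromBlocks h₁.sqrt (-W) Wᴴ (-h₂.sqrt) := by
      rw [hM, hJb, Matrix.fromBlocks_multiply]
      simp
    have step2 : Matrix.fromBlocks h₁.sqrt (-W) Wᴴ (-h₂.sqrt) * M = Jb := by
      rw [hM, hJb, Matrix.fromBlocks_multiply]
      have g11 : h₁.sqrt * h₁.sqrt + (-W) * Wᴴ = (1 : Matrix (Fin p) (Fin p) ℂ) := by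
        rw [Matrix.neg_mul, h₁.sqrt_mul_self]; abel
      have g12 : h₁.sqrt * W + (-W) * h₂.sqrt = 0 := by
        rw [Matrix.neg_mul, hSW]; abel
      have g21 : Wᴴ * h₁.sqrt + (-h₂.sqrt) * Wᴴ = 0 := by
        rw [Matrix.neg_mul, hWS]; abel
      have g22 : Wᴴ * W + (-h₂.sqrt) * h₂.sqrt = -(1 : Matrix (Fin q) (Fin q) ℂ) := by
        rw [Matrix.neg_mul, h₂.sqrt_mul_self]; abel
      rw [g11, g12, g21, g22]
    have h4 : M * Jb * M = Jb := by rw [step1]; exact step2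
    have stepV1 : Vᴴ * Jb = Matrix.fromBlocks Vpᴴ 0 0 (-Vmᴴ) := by
      rw [hV, hJb, Matrix.fromBlocks_conjTranspose, Matrix.fromBlocks_multiply]
      simp
    have stepV2 : Matrix.fromBlocks Vpᴴ 0 0 (-Vmᴴ) * V = Jb := by
      rw [hV, hJb, Matrix.fromBlocks_multiply]
      simp [Matrix.neg_mul, hVp1, hVm1]
    have hVJV : Vᴴ * Jb * V = Jb := by rw [stepV1]; exact stepV2
    have key : (M * V)ᴴ * Jb * (M * V) = Jb := by
      calc (M * V)ᴴ * Jb * (M * V)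
          = Vᴴ * (Mᴴ * Jb * M) * V := by
            rw [Matrix.conjTranspose_mul]; simp only [Matrix.mul_assoc]
        _ = Vᴴ * Jb * V := by rw [hMh, h4, Matrix.mul_assoc]
        _ = Jb := hVJV
    rw [reindex_conjTranspose, reindex_mul, reindex_mul]
    exact congrArg _ key
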